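/- Let 𝒞 be a collection of cells over a field K. Then the radical of the adjacent 2-minor ideal is the intersection of the ideals P_W(𝒞) over all admissible sets W of 𝒞: √I_adj(𝒞) = ⋂_{W ⊆ V(𝒞) admissible} P_W(𝒞) (the empty set is admissible, with P_∅(𝒞) = L_𝒞). -/

import Mathlib

open MvPolynomial

/-- The vertex set of the cell with lower-left corner `a`. -/
def cellVerts (a : ℤ × ℤ) : Finset (ℤ × ℤ) :=
  {a, a + (1, 0), a + (0, 1), a + (1, 1)}

/-- The edges of the cell with lower-left corner `a`, recorded as ordered pairs
of their two endpoints: `{a,c}`, `{c,b}`, `{b,d}`, `{a,d}` where `b = a+(1,1)`,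
`c = a+(0,1)`, `d = a+(1,0)`. -/
def cellEdges (a : ℤ × ℤ) : Finset ((ℤ × ℤ) × (ℤ × ℤ)) :=
  {(a, a + (0, 1)), (a + (0, 1), a + (1, 1)), (a + (1, 1), a + (1, 0)), (a, a + (1, 0))}

/-- The vertex set of a collection of cells; cells are recorded by their
lower-left corners. -/
def verts (C : Finset (ℤ × ℤ)) : Finset (ℤ × ℤ) :=
  C.biUnion cellVerts

lemma mem_verts {C : Finset (ℤ × ℤ)} {a v : ℤ × ℤ} (ha : a ∈ C)
    (hv : v ∈ cellVerts a) : v ∈ verts C :=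
  Finset.mem_biUnion.mpr ⟨a, ha, hv⟩

lemma corner_mem00 (a : ℤ × ℤ) : a ∈ cellVerts a := by simp [cellVerts]
lemma corner_mem10 (a : ℤ × ℤ) : a + (1, 0) ∈ cellVerts a := by simp [cellVerts]
lemma corner_mem01 (a : ℤ × ℤ) : a + (0, 1) ∈ cellVerts a := by simp [cellVerts]
lemma corner_mem11 (a : ℤ × ℤ) : a + (1, 1) ∈ cellVerts a := by simp [cellVerts]

/-- The adjacent 2-minor ideal `I_adj(𝒞)` of a collection of cells, inside the
polynomial ring `S_𝒞 = K[x_v : v ∈ V(𝒞)]`. -/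
noncomputable def adjIdeal (K : Type*) [Field K] (C : Finset (ℤ × ℤ)) :
    Ideal (MvPolynomial {v // v ∈ verts C} K) :=
  Ideal.span {f | ∃ a, ∃ ha : a ∈ C,
    f = X ⟨a, mem_verts ha (corner_mem00 a)⟩ *
          X ⟨a + (1, 1), mem_verts ha (corner_mem11 a)⟩ -
        X ⟨a + (0, 1), mem_verts ha (corner_mem01 a)⟩ *
          X ⟨a + (1, 0), mem_verts ha (corner_mem10 a)⟩}

/-- The vector `v_C = e_a + e_b - e_c - e_d ∈ ℤ^{V(𝒞)}` attached to the cell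
with lower-left corner `a` (so `b = a+(1,1)`, `c = a+(0,1)`, `d = a+(1,0)`). -/
def cellVec (C : Finset (ℤ × ℤ)) (a : ℤ × ℤ) : {v // v ∈ verts C} → ℤ :=
  fun w => ((if w.1 = a then 1 else 0) + (if w.1 = a + (1, 1) then 1 else 0)
    - (if w.1 = a + (0, 1) then 1 else 0)) - (if w.1 = a + (1, 0) then 1 else 0)

/-- The lattice `Λ_𝒟 ⊆ ℤ^{V(𝒞)}` generated by the vectors `v_C`, `C ∈ 𝒟`,
for a subcollection `𝒟` of `𝒞`. -/
def cellLattice (C : Finset (ℤ × ℤ)) (D : Set (ℤ × ℤ)) :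
    AddSubgroup ({v // v ∈ verts C} → ℤ) :=
  AddSubgroup.closure {g | ∃ a ∈ D, g = cellVec C a}

/-- The lattice ideal `L_𝒟 ⊆ S_𝒞` of a subcollection `𝒟` of `𝒞`. -/
noncomputable def latticeIdeal (K : Type*) [Field K] (C : Finset (ℤ × ℤ))
    (D : Set (ℤ × ℤ)) : Ideal (MvPolynomial {v // v ∈ verts C} K) :=
  Ideal.span {f | ∃ e ∈ cellLattice C D,
    f = (∏ w, X w ^ (e w).toNat) - ∏ w, X w ^ (-(e w)).toNat}

/-- `W ⊆ V(𝒞)` is admissible: for each cell `C ∈ 𝒞`, either `W ∩ C = ∅` or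
`W ∩ C` contains an edge of `C`. -/
def Admissible (C : Finset (ℤ × ℤ)) (W : Set (ℤ × ℤ)) : Prop :=
  W ⊆ ↑(verts C) ∧ ∀ a ∈ C, (∀ v ∈ cellVerts a, v ∉ W) ∨
    ∃ e ∈ cellEdges a, e.1 ∈ W ∧ e.2 ∈ W

/-- The subcollection `𝒞_W` of cells of `𝒞` disjoint from `W`. -/
def subcollW (C : Finset (ℤ × ℤ)) (W : Set (ℤ × ℤ)) : Set (ℤ × ℤ) :=
  {a | a ∈ C ∧ ∀ v ∈ cellVerts a, v ∉ W}

/-- The ideal `P_W(𝒞) = (x_w : w ∈ W) + L_{𝒞_W}`. -/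
noncomputable def PW (K : Type*) [Field K] (C : Finset (ℤ × ℤ))
    (W : Set (ℤ × ℤ)) : Ideal (MvPolynomial {v // v ∈ verts C} K) :=
  Ideal.span {f | ∃ v : {v // v ∈ verts C}, v.1 ∈ W ∧ f = X v} +
    latticeIdeal K C (subcollW C W)

/-- The height of an ideal: the infimum of `Order.height 𝔭` over the prime
ideals `𝔭` containing it (equivalently, over its minimal primes); for a prime
ideal this is just its height. -/
noncomputable def idealHeight {R : Type*} [CommRing R] (I : Ideal R) : ℕ∞ :=
  ⨅ p ∈ {p : PrimeSpectrum R | I ≤ p.asIdeal}, Order.height p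

/-- A collection of cells is weakly connected if any two of its cells are
joined by a sequence of cells of the collection in which consecutive cells
share at least one vertex. -/
def WeaklyConnected (C : Finset (ℤ × ℤ)) : Prop :=
  ∀ a ∈ C, ∀ b ∈ C, Relation.ReflTransGen
    (fun p q => p ∈ C ∧ q ∈ C ∧ ((cellVerts p ∩ cellVerts q).Nonempty)) a b

/-- `𝒞` contains a square tetromino. -/
def HasSquareTetromino (C : Finset (ℤ × ℤ)) : Prop :=
  ∃ a : ℤ × ℤ, a ∈ C ∧ a + (1, 0) ∈ C ∧ a + (0, 1) ∈ C ∧ a + (1, 1) ∈ C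

/-- `𝒞` contains an X-pentomino. -/
def HasXPentomino (C : Finset (ℤ × ℤ)) : Prop :=
  ∃ a : ℤ × ℤ, a ∈ C ∧ a + (1, 0) ∈ C ∧ a - (1, 0) ∈ C ∧
    a + (0, 1) ∈ C ∧ a - (0, 1) ∈ C

/-- Row convexity of a collection of cells. -/
def RowConvex (C : Finset (ℤ × ℤ)) : Prop :=
  ∀ a ∈ C, ∀ b ∈ C, a.2 = b.2 → ∀ r : ℤ, a.1 ≤ r → r ≤ b.1 → (r, a.2) ∈ C

/-- Column convexity of a collection of cells. -/
def ColConvex (C : Finset (ℤ × ℤ)) : Prop :=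
  ∀ a ∈ C, ∀ b ∈ C, a.1 = b.1 → ∀ s : ℤ, a.2 ≤ s → s ≤ b.2 → (a.1, s) ∈ C



lemma mapDomain_coeff {α β K : Type*} [Semiring K] [DecidableEq β] (h : α → β) (p : α →₀ K) (b : β) :
    Finsupp.mapDomain h p b = ∑ u ∈ p.support.filter (fun u => h u = b), p u := by
  classical
  rw [Finsupp.mapDomain, Finsupp.sum_apply, Finsupp.sum, Finset.sum_filter]
  simp [Finsupp.single_apply]

lemma mapDomain_ker_span {α β K : Type*} [Field K] (h : α → β) (p : α →₀ K)
    (hp : Finsupp.mapDomain h p = 0) :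
    p ∈ Submodule.span K {f : α →₀ K | ∃ u ∈ p.support, ∃ v ∈ p.support,
      h u = h v ∧ f = Finsupp.single u 1 - Finsupp.single v 1} := by
  classical
  by_cases hps : p.support = ∅
  · have : p = 0 := Finsupp.support_eq_empty.mp hps
    simp [this]
  set r : β → α := fun b =>
    if hb : ∃ u, u ∈ p.support ∧ h u = b then hb.choose
    else (Finset.nonempty_of_ne_empty hps).choose with hr
  have hrmem : ∀ b, (∃ u, u ∈ p.support ∧ h u = b) → r b ∈ p.support ∧ h (r b) = b := by
    intro b hb
    simp only [hr, dif_pos hb]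
    exact hb.choose_spec
  have key : p = ∑ u ∈ p.support, p u • (Finsupp.single u (1:K) - Finsupp.single (r (h u)) 1) := by
    have h1 : ∑ u ∈ p.support, p u • Finsupp.single u (1:K) = p := by
      have e : ∀ u ∈ p.support, p u • Finsupp.single u (1:K) = Finsupp.single u (p u) := by
        intro u _; rw [Finsupp.smul_single, smul_eq_mul, mul_one]
      rw [Finset.sum_congr rfl e]
      exact Finsupp.sum_single p
    have h2 : ∑ u ∈ p.support, p u • Finsupp.single (r (h u)) (1:K) = 0 := by
      rw [← Finset.sum_fiberwise_of_maps_to (fun u hu => Finset.mem_image_of_mem h hu)]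
      refine Finset.sum_eq_zero fun b hb => ?_
      have : ∀ u ∈ p.support.filter (fun u => h u = b),
          p u • Finsupp.single (r (h u)) (1:K) = Finsupp.single (r b) (p u) := by
        intro u hu
        rcases Finset.mem_filter.mp hu with ⟨hu1, hu2⟩
        rw [hu2, Finsupp.smul_single, smul_eq_mul, mul_one]
      rw [Finset.sum_congr rfl this, ← Finsupp.single_finset_sum, ← mapDomain_coeff h p b, hp]
      simp
    rw [Finset.sum_congr rfl (fun u _ => smul_sub (p u) _ _), Finset.sum_sub_distrib, h1, h2,
      sub_zero]
  have mem : ∑ u ∈ p.support, p u • (Finsupp.single u (1:K) - Finsupp.single (r (h u)) 1) ∈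
      Submodule.span K {f : α →₀ K | ∃ u ∈ p.support, ∃ v ∈ p.support,
      h u = h v ∧ f = Finsupp.single u 1 - Finsupp.single v 1} := by
    refine Submodule.sum_mem _ fun u hu => Submodule.smul_mem _ _ (Submodule.subset_span ?_)
    have hex : ∃ u', u' ∈ p.support ∧ h u' = h u := ⟨u, hu, rfl⟩
    rcases hrmem _ hex with ⟨hm, he⟩
    exact ⟨u, hu, r (h u), hm, he.symm, rfl⟩
  rwa [← key] at mem

/-- lex order -/
def ltl (p q : ℤ × ℤ) : Prop := p.1 < q.1 ∨ (p.1 = q.1 ∧ p.2 < q.2)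

lemma ltl_irrefl (p : ℤ × ℤ) : ¬ ltl p p := by simp [ltl]

lemma ltl_asymm {p q : ℤ × ℤ} (h : ltl p q) : ¬ ltl q p := by
  rcases h with h | ⟨h1, h2⟩ <;> rintro (h' | ⟨h'1, h'2⟩) <;> omega

lemma ltl_trans {p q r : ℤ × ℤ} (h : ltl p q) (h' : ltl q r) : ltl p r := by
  rcases h with h | ⟨h1, h2⟩ <;> rcases h' with h' | ⟨h'1, h'2⟩ <;>
    simp only [ltl] <;> omega

lemma ltl_add11 (a : ℤ × ℤ) : ltl a (a + (1,1)) := by simp [ltl, Prod.ext_iff]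
lemma ltl_add01 (a : ℤ × ℤ) : ltl a (a + (0,1)) := by
  right; constructor <;> simp [Prod.ext_iff]
lemma ltl_add10 (a : ℤ × ℤ) : ltl a (a + (1,0)) := by simp [ltl]

lemma cellVec_corner {C : Finset (ℤ × ℤ)} (a : ℤ × ℤ) (w : {v // v ∈ verts C})
    (hw : w.1 = a) : cellVec C a w = 1 := by
  have h1 : a ≠ a + (1,1) := by simp [Prod.ext_iff]
  have h2 : a ≠ a + (0,1) := by simp [Prod.ext_iff]
  have h3 : a ≠ a + (1,0) := by simp [Prod.ext_iff]
  simp [cellVec, hw, h1, h2, h3]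

lemma cellVec_ne_zero {C : Finset (ℤ × ℤ)} {a : ℤ × ℤ} {w : {v // v ∈ verts C}}
    (h : cellVec C a w ≠ 0) : w.1 = a ∨ ltl a w.1 := by
  by_contra hc
  push_neg at hc
  obtain ⟨h0, hl⟩ := hc
  have h1 : w.1 ≠ a + (1,1) := fun he => hl (he ▸ ltl_add11 a)
  have h2 : w.1 ≠ a + (0,1) := fun he => hl (he ▸ ltl_add01 a)
  have h3 : w.1 ≠ a + (1,0) := fun he => hl (he ▸ ltl_add10 a)
  exact h (by unfold cellVec; rw [if_neg h0, if_neg h1, if_neg h2, if_neg h3]; ring)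


lemma span_saturated (C : Finset (ℤ × ℤ)) (D : Set (ℤ × ℤ)) (hD : ∀ a ∈ D, a ∈ C)
    (n : ℤ) (hn : n ≠ 0) (x : {v // v ∈ verts C} → ℤ)
    (hx : n • x ∈ Submodule.span ℤ {g | ∃ a ∈ D, g = cellVec C a}) :
    x ∈ Submodule.span ℤ {g | ∃ a ∈ D, g = cellVec C a} := by
  classical
  have hset : {g | ∃ a ∈ D, g = cellVec C a} =
      Set.range (fun t : {a // a ∈ D} => cellVec C t.1) := by
    ext g
    constructor
    · rintro ⟨a, ha, rfl⟩; exact ⟨⟨a, ha⟩, rfl⟩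
    · rintro ⟨t, rfl⟩; exact ⟨t.1, t.2, rfl⟩
  rw [hset] at hx ⊢
  rw [Finsupp.mem_span_range_iff_exists_finsupp] at hx
  obtain ⟨c, hc⟩ := hx
  have hvert : ∀ t : {a // a ∈ D}, t.1 ∈ verts C :=
    fun t => mem_verts (hD t.1 t.2) (corner_mem00 t.1)
  have hc' : ∀ u : {v // v ∈ verts C},
      ∑ i ∈ c.support, c i * cellVec C i.1 u = n * x u := by
    intro u
    have := congrFun hc u
    rw [Finsupp.sum, Finset.sum_apply] at this
    simpa [Pi.smul_apply, smul_eq_mul] using this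
  have key : ∀ k, ∀ t ∈ c.support,
      (c.support.filter (fun t' => ltl t'.1 t.1)).card = k → n ∣ c t := by
    intro k
    induction k using Nat.strong_induction_on with
    | _ k IH =>
      intro t ht hcard
      have he := hc' ⟨t.1, hvert t⟩
      have hsplit : ∑ i ∈ c.support, c i * cellVec C i.1 ⟨t.1, hvert t⟩
          = c t * cellVec C t.1 ⟨t.1, hvert t⟩
            + ∑ i ∈ c.support.erase t, c i * cellVec C i.1 ⟨t.1, hvert t⟩ :=
        (Finset.add_sum_erase _ _ ht).symm
      have hvt : cellVec C t.1 (⟨t.1, hvert t⟩ : {v // v ∈ verts C}) = 1 :=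
        cellVec_corner t.1 _ rfl
      have hdvd : ∀ i ∈ c.support.erase t,
          n ∣ c i * cellVec C i.1 ⟨t.1, hvert t⟩ := by
        intro i hi
        rcases Finset.mem_erase.mp hi with ⟨hne, hisup⟩
        by_cases hz : cellVec C i.1 (⟨t.1, hvert t⟩ : {v // v ∈ verts C}) = 0
        · simp [hz]
        · have hlt : ltl i.1 t.1 := by
            rcases cellVec_ne_zero hz with h1 | h2
            · exact absurd (Subtype.ext h1.symm) hne
            · exact h2
          have hsub : c.support.filter (fun t' => ltl t'.1 i.1) ⊆
              (c.support.filter (fun t' => ltl t'.1 t.1)).erase i := by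
            intro j hj
            rcases Finset.mem_filter.mp hj with ⟨hj1, hj2⟩
            refine Finset.mem_erase.mpr ⟨?_, Finset.mem_filter.mpr ⟨hj1, ltl_trans hj2 hlt⟩⟩
            rintro rfl
            exact ltl_irrefl _ hj2
          have hmem : i ∈ c.support.filter (fun t' => ltl t'.1 t.1) :=
            Finset.mem_filter.mpr ⟨hisup, hlt⟩
          have hlt' : (c.support.filter (fun t' => ltl t'.1 i.1)).card < k :=
            hcard ▸ lt_of_le_of_lt (Finset.card_le_card hsub)
              (Finset.card_erase_lt_of_mem hmem)
          exact Dvd.dvd.mul_right (IH _ hlt' i hisup rfl) _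
      have hct : c t = n * x ⟨t.1, hvert t⟩
          - ∑ i ∈ c.support.erase t, c i * cellVec C i.1 ⟨t.1, hvert t⟩ := by
        rw [hsplit, hvt, mul_one] at he
        linarith
      rw [hct]
      exact dvd_sub (Dvd.intro _ rfl) (Finset.dvd_sum hdvd)
  have hdvdall : ∀ t, n ∣ c t := by
    intro t
    by_cases ht : t ∈ c.support
    · exact key _ t ht rfl
    · simp [Finsupp.notMem_support_iff.mp ht]
  set y : {v // v ∈ verts C} → ℤ :=
    ∑ i ∈ c.support, (c i / n) • cellVec C i.1 with hy
  have hny : n • y = n • x := by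
    rw [hy, Finset.smul_sum]
    have : ∀ i ∈ c.support, n • ((c i / n) • cellVec C i.1) = c i • cellVec C i.1 := by
      intro i _
      rw [smul_smul, Int.mul_ediv_cancel' (hdvdall i)]
    rw [Finset.sum_congr rfl this, ← hc]
    rw [Finsupp.sum]
  have hxy : x = y := by
    have : Function.Injective (fun z : {v // v ∈ verts C} → ℤ => n • z) :=
      smul_right_injective _ hn
    exact (this hny).symm
  rw [hxy, hy]
  exact Submodule.sum_mem _ fun i _ => Submodule.smul_mem _ _
    (Submodule.subset_span ⟨i, rfl⟩)

section Wsec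
variable (K : Type*) [Field K] (C : Finset (ℤ × ℤ)) (W : Set (ℤ × ℤ))

/-- The lattice as a `ℤ`-submodule. -/
def latMod : Submodule ℤ ({v // v ∈ verts C} → ℤ) :=
  Submodule.span ℤ {g | ∃ a ∈ subcollW C W, g = cellVec C a}

lemma mem_cellLattice_iff (e : {v // v ∈ verts C} → ℤ) :
    e ∈ cellLattice C (subcollW C W) ↔ e ∈ latMod C W := by
  rw [cellLattice, ← Submodule.span_int_eq_addSubgroupClosure]
  rfl

/-- The quotient group. -/
def AW := ({v // v ∈ verts C} → ℤ) ⧸ latMod C W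

instance : AddCommGroup (AW C W) := by unfold AW; infer_instance
instance : Module ℤ (AW C W) := by unfold AW; infer_instance

lemma AW_torsionfree : NoZeroSMulDivisors ℤ (AW C W) := by
  constructor
  intro n a h
  by_cases hn : n = 0
  · exact Or.inl hn
  refine Or.inr ?_
  obtain ⟨x, rfl⟩ := Submodule.Quotient.mk_surjective (latMod C W) a
  change (Submodule.Quotient.mk (n • x) : _ ⧸ latMod C W) = 0 at h
  rw [Submodule.Quotient.mk_eq_zero] at h
  change (Submodule.Quotient.mk x : _ ⧸ latMod C W) = 0
  rw [Submodule.Quotient.mk_eq_zero]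
  exact span_saturated C _ (fun a ha => ha.1) n hn x h

instance : Module.Finite ℤ (AW C W) := by
  unfold AW; infer_instance

lemma AW_uniqueSums : UniqueSums (AW C W) := by
  haveI := AW_torsionfree C W
  haveI : Module.IsTorsionFree ℤ (AW C W) := Module.isTorsionFree_iff_smul_eq_zero.mpr
    (fun r m h => (AW_torsionfree C W).eq_zero_or_eq_zero_of_smul_eq_zero h)
  haveI : Module.Free ℤ (AW C W) := Module.free_of_finite_type_torsion_free'
  let b := Module.Free.chooseBasis ℤ (AW C W)
  exact UniqueSums.of_injective_addHom
    (AddMonoidHom.toAddHom (LinearMap.toAddMonoidHom b.repr.toLinearMap))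
    b.repr.injective inferInstance

lemma AMA_isDomain : IsDomain (AddMonoidAlgebra K (AW C W)) := by
  haveI := AW_uniqueSums C W
  exact NoZeroDivisors.to_isDomain _

/-- quotient map -/
def qW : ({v // v ∈ verts C} → ℤ) →ₗ[ℤ] AW C W := (latMod C W).mkQ

open scoped Classical in
/-- The homomorphism whose kernel is `P_W`. -/
noncomputable def phiW : MvPolynomial {v // v ∈ verts C} K →ₐ[K] AddMonoidAlgebra K (AW C W) :=
  aeval (fun v => if v.1 ∈ W then 0
    else AddMonoidAlgebra.single (qW C W (Pi.single v 1)) 1)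

lemma iota_eq_sum (u : {v // v ∈ verts C} →₀ ℕ) :
    (fun v => (u v : ℤ)) = ∑ v ∈ u.support, (u v : ℤ) • Pi.single v (1:ℤ) := by
  classical
  funext w
  rw [Finset.sum_apply]
  simp only [Pi.smul_apply, Pi.single_apply, smul_eq_mul, mul_ite, mul_one, mul_zero]
  rw [Finset.sum_ite_eq u.support w (fun v => (u v : ℤ))]
  split
  · rfl
  · simp [Finsupp.notMem_support_iff.mp ‹_›]

open scoped Classical in
lemma phiW_monomial_free (u : {v // v ∈ verts C} →₀ ℕ) (c : K)
    (hu : ∀ v ∈ u.support, v.1 ∉ W) :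
    phiW K C W (monomial u c)
      = AddMonoidAlgebra.single (qW C W (fun v => (u v : ℤ))) c := by
  classical
  rw [phiW, aeval_monomial]
  have hprod : (u.prod fun v k => (if v.1 ∈ W then 0
      else AddMonoidAlgebra.single (qW C W (Pi.single v 1)) (1:K)) ^ k)
      = AddMonoidAlgebra.single (qW C W (fun v => (u v : ℤ))) 1 := by
    rw [Finsupp.prod]
    have : ∀ v ∈ u.support, (if v.1 ∈ W then 0
        else AddMonoidAlgebra.single (qW C W (Pi.single v 1)) (1:K)) ^ u v
        = AddMonoidAlgebra.single ((u v : ℤ) • qW C W (Pi.single v 1)) 1 := by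
      intro v hv
      rw [if_neg (hu v hv), AddMonoidAlgebra.single_pow, one_pow, natCast_zsmul]
    rw [Finset.prod_congr rfl this]
    rw [AddMonoidAlgebra.prod_single, Finset.prod_const_one]
    congr 1
    rw [iota_eq_sum, map_sum]
    exact Finset.sum_congr rfl fun v _ => by rw [map_smul]
  rw [hprod]
  rw [Algebra.algebraMap_eq_smul_one, smul_mul_assoc, one_mul,
    AddMonoidAlgebra.smul_single', mul_one]

open scoped Classical in
lemma phiW_monomial_W (u : {v // v ∈ verts C} →₀ ℕ) (c : K)
    (hu : ∃ v ∈ u.support, v.1 ∈ W) :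
    phiW K C W (monomial u c) = 0 := by
  classical
  rw [phiW, aeval_monomial, Finsupp.prod]
  obtain ⟨v, hv, hvW⟩ := hu
  rw [Finset.prod_eq_zero hv]
  · rw [mul_zero]
  · rw [if_pos hvW]
    exact zero_pow (Finsupp.mem_support_iff.mp hv)

lemma prod_X_pow (k : {v // v ∈ verts C} →₀ ℕ) :
    ∏ w, (X w : MvPolynomial {v // v ∈ verts C} K) ^ k w = monomial k 1 := by
  classical
  rw [monomial_eq, C_1, one_mul, Finsupp.prod]
  exact (Finset.prod_subset (Finset.subset_univ _) (fun w _ hw => by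
    rw [Finsupp.notMem_support_iff.mp hw, pow_zero])).symm

/-- binomials from the lattice lie in the lattice ideal -/
lemma binomial_mem_latticeIdeal (u u' : {v // v ∈ verts C} →₀ ℕ)
    (h : (fun v => (u v : ℤ) - (u' v : ℤ)) ∈ cellLattice C (subcollW C W)) :
    (monomial u 1 - monomial u' 1 : MvPolynomial {v // v ∈ verts C} K)
      ∈ latticeIdeal K C (subcollW C W) := by
  classical
  set e : {v // v ∈ verts C} → ℤ := fun v => (u v : ℤ) - (u' v : ℤ) with he
  have hgen : ((∏ w, X w ^ (e w).toNat) - ∏ w, X w ^ (-(e w)).toNat :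
      MvPolynomial {v // v ∈ verts C} K) ∈ latticeIdeal K C (subcollW C W) :=
    Ideal.subset_span ⟨e, h, rfl⟩
  set m : {v // v ∈ verts C} →₀ ℕ :=
    Finsupp.zipWith min rfl u u' with hm
  set ep : {v // v ∈ verts C} →₀ ℕ :=
    Finsupp.equivFunOnFinite.symm (fun w => (e w).toNat) with hep
  set em : {v // v ∈ verts C} →₀ ℕ :=
    Finsupp.equivFunOnFinite.symm (fun w => (-(e w)).toNat) with hem
  have hprodp : (∏ w, X w ^ (e w).toNat : MvPolynomial {v // v ∈ verts C} K)
      = monomial ep 1 := by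
    rw [← prod_X_pow K C ep]
    exact Finset.prod_congr rfl fun w _ => by
      rw [hep]; rfl
  have hprodm : (∏ w, X w ^ (-(e w)).toNat : MvPolynomial {v // v ∈ verts C} K)
      = monomial em 1 := by
    rw [← prod_X_pow K C em]
    exact Finset.prod_congr rfl fun w _ => by
      rw [hem]; rfl
  have key : monomial m (1:K) * ((∏ w, X w ^ (e w).toNat) - ∏ w, X w ^ (-(e w)).toNat)
      = monomial u 1 - monomial u' 1 := by
    rw [hprodp, hprodm, mul_sub, monomial_mul, monomial_mul, one_mul]
    have h1 : m + ep = u := by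
      ext w
      simp only [Finsupp.add_apply, hm, Finsupp.zipWith_apply, hep,
        Finsupp.coe_equivFunOnFinite_symm, he]
      omega
    have h2 : m + em = u' := by
      ext w
      simp only [Finsupp.add_apply, hm, Finsupp.zipWith_apply, hem,
        Finsupp.coe_equivFunOnFinite_symm, he]
      omega
    rw [h1, h2]
  rw [← key]
  exact Ideal.mul_mem_left _ _ hgen

lemma lattice_vanish {e : {v // v ∈ verts C} → ℤ}
    (h : e ∈ cellLattice C (subcollW C W)) : ∀ v, v.1 ∈ W → e v = 0 := by
  rw [mem_cellLattice_iff, latMod] at h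
  induction h using Submodule.span_induction with
  | mem g hg =>
    obtain ⟨a, ha, rfl⟩ := hg
    intro v hv
    have hnv : ∀ vv ∈ cellVerts a, vv ≠ v.1 := fun vv hvv heq => ha.2 vv hvv (heq ▸ hv)
    have h0 : v.1 ≠ a := fun h => (hnv a (corner_mem00 a)) h.symm
    have h1 : v.1 ≠ a + (1,1) := fun h => (hnv _ (by simp [cellVerts])) h.symm
    have h2 : v.1 ≠ a + (0,1) := fun h => (hnv _ (by simp [cellVerts])) h.symm
    have h3 : v.1 ≠ a + (1,0) := fun h => (hnv _ (by simp [cellVerts])) h.symm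
    unfold cellVec
    rw [if_neg h0, if_neg h1, if_neg h2, if_neg h3]
    ring
  | zero => intro v _; rfl
  | add g g' _ _ ih ih' =>
    intro v hv
    have := ih v hv
    have := ih' v hv
    simp only [Pi.add_apply]
    omega
  | smul n g _ ih =>
    intro v hv
    simp only [Pi.smul_apply, smul_eq_mul, ih v hv, mul_zero]

lemma phiW_X_W (v : {v // v ∈ verts C}) (hv : v.1 ∈ W) : phiW K C W (X v) = 0 := by
  classical
  rw [phiW, aeval_X]
  rw [if_pos hv]

lemma phiW_latticeGen (e : {v // v ∈ verts C} → ℤ)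
    (h : e ∈ cellLattice C (subcollW C W)) :
    phiW K C W ((∏ w, X w ^ (e w).toNat) - ∏ w, X w ^ (-(e w)).toNat) = 0 := by
  classical
  set ep : {v // v ∈ verts C} →₀ ℕ :=
    Finsupp.equivFunOnFinite.symm (fun w => (e w).toNat) with hep
  set em : {v // v ∈ verts C} →₀ ℕ :=
    Finsupp.equivFunOnFinite.symm (fun w => (-(e w)).toNat) with hem
  have hvan := lattice_vanish C W h
  have hepf : ∀ v ∈ ep.support, v.1 ∉ W := by
    intro v hv hvW
    have := hvan v hvW
    have h2 : ep v ≠ 0 := Finsupp.mem_support_iff.mp hv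
    rw [hep] at h2
    simp only [Finsupp.coe_equivFunOnFinite_symm] at h2
    omega
  have hemf : ∀ v ∈ em.support, v.1 ∉ W := by
    intro v hv hvW
    have := hvan v hvW
    have h2 : em v ≠ 0 := Finsupp.mem_support_iff.mp hv
    rw [hem] at h2
    simp only [Finsupp.coe_equivFunOnFinite_symm] at h2
    omega
  have hp1 : (∏ w, X w ^ (e w).toNat : MvPolynomial {v // v ∈ verts C} K)
      = monomial ep 1 := by
    rw [← prod_X_pow K C ep]
    exact Finset.prod_congr rfl fun w _ => by rw [hep]; rfl
  have hp2 : (∏ w, X w ^ (-(e w)).toNat : MvPolynomial {v // v ∈ verts C} K)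
      = monomial em 1 := by
    rw [← prod_X_pow K C em]
    exact Finset.prod_congr rfl fun w _ => by rw [hem]; rfl
  rw [hp1, hp2, map_sub, phiW_monomial_free K C W ep 1 hepf,
    phiW_monomial_free K C W em 1 hemf]
  have : qW C W (fun v => ((ep v : ℕ) : ℤ)) = qW C W (fun v => ((em v : ℕ) : ℤ)) := by
    rw [qW]
    have heq : ((fun v => ((ep v : ℕ) : ℤ)) - fun v => ((em v : ℕ) : ℤ)) = e := by
      funext v
      simp only [Pi.sub_apply, hep, hem, Finsupp.coe_equivFunOnFinite_symm]
      omega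
    exact (Submodule.Quotient.eq _).mpr (heq ▸ (mem_cellLattice_iff C W e).mp h)
  rw [this, sub_self]

lemma PW_le_ker : PW K C W ≤ RingHom.ker (phiW K C W).toRingHom := by
  rw [PW]
  apply sup_le
  · rw [Ideal.span_le]
    rintro g ⟨v, hv, rfl⟩
    exact phiW_X_W K C W v hv
  · rw [latticeIdeal, Ideal.span_le]
    rintro g ⟨e, he, rfl⟩
    exact phiW_latticeGen K C W e he

lemma ker_le_PW : RingHom.ker (phiW K C W).toRingHom ≤ PW K C W := by
  classical
  intro f hf0
  rw [RingHom.mem_ker] at hf0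
  have hf : phiW K C W f = 0 := hf0
  set P : ({v // v ∈ verts C} →₀ ℕ) → Prop := fun u => ∀ v ∈ u.support, v.1 ∉ W with hP
  set s1 := f.support.filter P with hs1
  set s2 := f.support.filter (fun u => ¬ P u) with hs2
  set fgood : MvPolynomial {v // v ∈ verts C} K :=
    ∑ u ∈ s1, monomial u (coeff u f) with hfgood
  set fbad : MvPolynomial {v // v ∈ verts C} K :=
    ∑ u ∈ s2, monomial u (coeff u f) with hfbad
  have hsplit : f = fgood + fbad := by
    rw [hfgood, hfbad, hs1, hs2, Finset.sum_filter_add_sum_filter_not]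
    exact as_sum f
  have hbad : fbad ∈ PW K C W := by
    apply Submodule.mem_sup_left
    have hxset : {g : MvPolynomial {v // v ∈ verts C} K |
        ∃ v : {v // v ∈ verts C}, v.1 ∈ W ∧ g = X v}
        = X '' {v : {v // v ∈ verts C} | v.1 ∈ W} := by
      ext g
      constructor
      · rintro ⟨v, hv, rfl⟩; exact ⟨v, hv, rfl⟩
      · rintro ⟨v, hv, rfl⟩; exact ⟨v, hv, rfl⟩
    rw [hxset, mem_ideal_span_X_image]
    intro m hm
    have hmem : m ∈ s2 := by
      have := MvPolynomial.support_sum (s := s2)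
        (f := fun u => (monomial u (coeff u f) : MvPolynomial {v // v ∈ verts C} K)) hm
      rcases Finset.mem_biUnion.mp this with ⟨u, hu, hmu⟩
      have hmu' : m ∈ ((monomial u) (coeff u f)).support := hmu
      have : m ∈ ({u} : Finset _) := by
        have hsub := support_monomial (a := coeff u f) (s := u)
        rw [hsub] at hmu'
        split at hmu'
        · exact absurd hmu' (Finset.notMem_empty m)
        · exact hmu'
      rwa [Finset.mem_singleton.mp this]
    rcases Finset.mem_filter.mp hmem with ⟨hm1, hm2⟩
    simp only [hP, not_forall, not_not, exists_prop] at hm2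
    obtain ⟨v, hv, hvW⟩ := hm2
    exact ⟨v, hvW, Finsupp.mem_support_iff.mp hv⟩
  have hphibad : phiW K C W fbad = 0 := by
    rw [hfbad, map_sum]
    apply Finset.sum_eq_zero
    intro u hu
    rcases Finset.mem_filter.mp hu with ⟨hu1, hu2⟩
    simp only [hP, not_forall, not_not, exists_prop] at hu2
    obtain ⟨v, hv, hvW⟩ := hu2
    exact phiW_monomial_W K C W u _ ⟨v, hv, hvW⟩
  have hphigood : phiW K C W fgood = 0 := by
    have := hf
    rw [hsplit, map_add, hphibad, add_zero] at this
    exact this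
  set hmap : ({v // v ∈ verts C} →₀ ℕ) → AW C W :=
    fun u => qW C W (fun v => (u v : ℤ)) with hhmap
  have hgoodP : ∀ u ∈ s1, ∀ v ∈ u.support, v.1 ∉ W := by
    intro u hu
    exact (Finset.mem_filter.mp hu).2
  have hmapd : Finsupp.mapDomain hmap
      (AddMonoidAlgebra.coeff (fgood : MvPolynomial {v // v ∈ verts C} K))
      = AddMonoidAlgebra.coeff (phiW K C W fgood) := by
    rw [hfgood, map_sum]
    simp only [AddMonoidAlgebra.coeff_sum]
    rw [Finsupp.mapDomain_finset_sum]
    refine Finset.sum_congr rfl fun u hu => ?_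
    rw [phiW_monomial_free K C W u _ (hgoodP u hu), ← single_eq_monomial,
      AddMonoidAlgebra.coeff_single, AddMonoidAlgebra.coeff_single, Finsupp.mapDomain_single]
  have hker0 : Finsupp.mapDomain hmap
      (AddMonoidAlgebra.coeff (fgood : MvPolynomial {v // v ∈ verts C} K)) = 0 := by
    simp [hmapd, hphigood]
  have hspan := mapDomain_ker_span hmap (AddMonoidAlgebra.coeff fgood) hker0
  have hsupgood : ∀ u, u ∈ (fgood : MvPolynomial {v // v ∈ verts C} K).support → u ∈ s1 := by
    intro u hu
    have := MvPolynomial.support_sum (s := s1)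
      (f := fun u => (monomial u (coeff u f) : MvPolynomial {v // v ∈ verts C} K)) hu
    rcases Finset.mem_biUnion.mp this with ⟨u', hu', hmu⟩
    have hmu' : u ∈ ((monomial u') (coeff u' f)).support := hmu
    have : u ∈ ({u'} : Finset _) := by
      have hsub := support_monomial (a := coeff u' f) (s := u')
      rw [hsub] at hmu'
      split at hmu'
      · exact absurd hmu' (Finset.notMem_empty u)
      · exact hmu'
    rwa [Finset.mem_singleton.mp this]
  have hgood : ∀ z, z ∈ Submodule.span K
      {g : ({v // v ∈ verts C} →₀ ℕ) →₀ K |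
        ∃ u ∈ (fgood : MvPolynomial {v // v ∈ verts C} K).support,
        ∃ v ∈ (fgood : MvPolynomial {v // v ∈ verts C} K).support,
        hmap u = hmap v ∧ g = Finsupp.single u 1 - Finsupp.single v 1}
      → AddMonoidAlgebra.ofCoeff z ∈ PW K C W := by
    intro z hz
    induction hz using Submodule.span_induction with
    | mem g hg =>
      obtain ⟨u, hu, v, hv, huv, rfl⟩ := hg
      have hPu := hgoodP u (hsupgood u hu)
      have hPv := hgoodP v (hsupgood v hv)
      have hlat : (fun w => (u w : ℤ) - (v w : ℤ)) ∈ cellLattice C (subcollW C W) := by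
        rw [mem_cellLattice_iff]
        have := (Submodule.Quotient.eq (latMod C W)).mp huv
        exact this
      have := binomial_mem_latticeIdeal K C W u v hlat
      rw [AddMonoidAlgebra.ofCoeff_sub, AddMonoidAlgebra.ofCoeff_single,
        AddMonoidAlgebra.ofCoeff_single, single_eq_monomial, single_eq_monomial]
      exact Submodule.mem_sup_right this
    | zero => rw [AddMonoidAlgebra.ofCoeff_zero]; exact Submodule.zero_mem _
    | add g g' _ _ ih ih' => rw [AddMonoidAlgebra.ofCoeff_add]; exact Submodule.add_mem _ ih ih'
    | smul c g _ ih =>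
      rw [AddMonoidAlgebra.ofCoeff_smul, smul_eq_C_mul]
      exact Ideal.mul_mem_left _ _ ih
  rw [hsplit]
  exact Submodule.add_mem _ (hgood _ hspan) hbad

lemma PW_eq_ker : PW K C W = RingHom.ker (phiW K C W).toRingHom :=
  le_antisymm (PW_le_ker K C W) (ker_le_PW K C W)

lemma PW_isPrime : (PW K C W).IsPrime := by
  rw [PW_eq_ker]
  haveI := AMA_isDomain K C W
  exact RingHom.ker_isPrime _

end Wsec

section Prods
variable (K : Type*) [Field K] (C : Finset (ℤ × ℤ))

lemma dist_a11 (a : ℤ × ℤ) : a + (1,1) ≠ a := by simp [Prod.ext_iff]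
lemma dist_a01 (a : ℤ × ℤ) : a + (0,1) ≠ a := by simp [Prod.ext_iff]
lemma dist_a10 (a : ℤ × ℤ) : a + (1,0) ≠ a := by simp [Prod.ext_iff]
lemma dist_11_01 (a : ℤ × ℤ) : a + (1,1) ≠ a + (0,1) := by simp [Prod.ext_iff]
lemma dist_11_10 (a : ℤ × ℤ) : a + (1,1) ≠ a + (1,0) := by simp [Prod.ext_iff]
lemma dist_01_10 (a : ℤ × ℤ) : a + (0,1) ≠ a + (1,0) := by simp [Prod.ext_iff]

lemma cellVec_at11 {a : ℤ × ℤ} (w : {v // v ∈ verts C}) (hw : w.1 = a + (1,1)) :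
    cellVec C a w = 1 := by
  unfold cellVec
  rw [hw, if_neg (dist_a11 a), if_pos rfl, if_neg ((dist_11_01 a)),
    if_neg ((dist_11_10 a))]
  ring

lemma cellVec_at01 {a : ℤ × ℤ} (w : {v // v ∈ verts C}) (hw : w.1 = a + (0,1)) :
    cellVec C a w = -1 := by
  unfold cellVec
  rw [hw, if_neg (dist_a01 a), if_neg (fun h => dist_11_01 a h.symm), if_pos rfl,
    if_neg ((dist_01_10 a))]
  ring

lemma cellVec_at10 {a : ℤ × ℤ} (w : {v // v ∈ verts C}) (hw : w.1 = a + (1,0)) :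
    cellVec C a w = -1 := by
  unfold cellVec
  rw [hw, if_neg (dist_a10 a), if_neg (fun h => dist_11_10 a h.symm),
    if_neg (fun h => dist_01_10 a h.symm), if_pos rfl]
  ring

lemma cellVec_nonpos {a : ℤ × ℤ} (w : {v // v ∈ verts C}) (h0 : w.1 ≠ a)
    (h1 : w.1 ≠ a + (1,1)) : cellVec C a w ≤ 0 := by
  unfold cellVec
  rw [if_neg h0, if_neg h1]
  split_ifs <;> omega

lemma cellVec_nonneg {a : ℤ × ℤ} (w : {v // v ∈ verts C}) (h0 : w.1 ≠ a + (0,1))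
    (h1 : w.1 ≠ a + (1,0)) : 0 ≤ cellVec C a w := by
  unfold cellVec
  rw [if_neg h0, if_neg h1]
  split_ifs <;> omega

lemma prod_ite_X (va : {v // v ∈ verts C}) :
    (∏ w, X w ^ (if w = va then 1 else 0) : MvPolynomial {v // v ∈ verts C} K) = X va := by
  classical
  have : ∀ w : {v // v ∈ verts C},
      (X w ^ (if w = va then 1 else 0) : MvPolynomial {v // v ∈ verts C} K)
      = if w = va then X w else 1 := by
    intro w
    split <;> simp
  rw [Finset.prod_congr rfl (fun w _ => this w)]
  rw [Finset.prod_ite_eq' Finset.univ va (fun w => (X w : MvPolynomial {v // v ∈ verts C} K))]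
  rw [if_pos (Finset.mem_univ va)]

lemma prod_two_X (va vb : {v // v ∈ verts C}) (hab : va ≠ vb)
    (k : {v // v ∈ verts C} → ℕ)
    (hk : ∀ w, k w = (if w = va then 1 else 0) + (if w = vb then 1 else 0)) :
    (∏ w, X w ^ k w : MvPolynomial {v // v ∈ verts C} K) = X va * X vb := by
  classical
  have : ∀ w : {v // v ∈ verts C}, (X w ^ k w : MvPolynomial {v // v ∈ verts C} K)
      = X w ^ (if w = va then 1 else 0) * X w ^ (if w = vb then 1 else 0) := by
    intro w
    rw [hk w, pow_add]
  rw [Finset.prod_congr rfl (fun w _ => this w), Finset.prod_mul_distrib,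
    prod_ite_X K C va, prod_ite_X K C vb]

lemma prod_pos_part {a : ℤ × ℤ} (h1 : a ∈ verts C) (h2 : a + (1,1) ∈ verts C) :
    (∏ w, X w ^ (cellVec C a w).toNat : MvPolynomial {v // v ∈ verts C} K)
      = X ⟨a, h1⟩ * X ⟨a + (1,1), h2⟩ := by
  classical
  refine prod_two_X K C _ _ (fun h => dist_a11 a (congrArg Subtype.val h).symm) _ ?_
  intro w
  by_cases hwa : w = (⟨a, h1⟩ : {v // v ∈ verts C})
  · rw [if_pos hwa, if_neg (by rw [hwa]; exact fun h => dist_a11 a (congrArg Subtype.val h).symm)]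
    rw [cellVec_corner a w (by rw [hwa])]
    rfl
  · by_cases hwb : w = (⟨a + (1,1), h2⟩ : {v // v ∈ verts C})
    · rw [if_neg hwa, if_pos hwb]
      rw [cellVec_at11 C w (by rw [hwb])]
      rfl
    · rw [if_neg hwa, if_neg hwb]
      have h0 : w.1 ≠ a := fun h => hwa (Subtype.ext h)
      have h1' : w.1 ≠ a + (1,1) := fun h => hwb (Subtype.ext h)
      have := cellVec_nonpos C w h0 h1'
      omega

lemma prod_neg_part {a : ℤ × ℤ} (h3 : a + (0,1) ∈ verts C) (h4 : a + (1,0) ∈ verts C) :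
    (∏ w, X w ^ (-(cellVec C a w)).toNat : MvPolynomial {v // v ∈ verts C} K)
      = X ⟨a + (0,1), h3⟩ * X ⟨a + (1,0), h4⟩ := by
  classical
  refine prod_two_X K C _ _ (fun h => dist_01_10 a (congrArg Subtype.val h)) _ ?_
  intro w
  by_cases hwa : w = (⟨a + (0,1), h3⟩ : {v // v ∈ verts C})
  · rw [if_pos hwa, if_neg (by rw [hwa]; exact fun h => dist_01_10 a (congrArg Subtype.val h))]
    rw [cellVec_at01 C w (by rw [hwa])]
    rfl
  · by_cases hwb : w = (⟨a + (1,0), h4⟩ : {v // v ∈ verts C})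
    · rw [if_neg hwa, if_pos hwb]
      rw [cellVec_at10 C w (by rw [hwb])]
      rfl
    · rw [if_neg hwa, if_neg hwb]
      have h0 : w.1 ≠ a + (0,1) := fun h => hwa (Subtype.ext h)
      have h1' : w.1 ≠ a + (1,0) := fun h => hwb (Subtype.ext h)
      have := cellVec_nonneg C w h0 h1'
      omega

end Prods

section AdjPW
variable (K : Type*) [Field K] (C : Finset (ℤ × ℤ)) (W : Set (ℤ × ℤ))

lemma X_mem_PW {v : {v // v ∈ verts C}} (hv : v.1 ∈ W) :
    (X v : MvPolynomial {v // v ∈ verts C} K) ∈ PW K C W :=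
  Submodule.mem_sup_left (Ideal.subset_span ⟨v, hv, rfl⟩)

lemma adj_le_PW (hW : Admissible C W) : adjIdeal K C ≤ PW K C W := by
  classical
  rw [adjIdeal, Ideal.span_le]
  rintro g ⟨a, ha, rfl⟩
  rcases hW.2 a ha with hdisj | ⟨ed, hed, he1, he2⟩
  · -- cell disjoint from W : use lattice ideal
    have haD : a ∈ subcollW C W := ⟨ha, hdisj⟩
    have hlat : cellVec C a ∈ cellLattice C (subcollW C W) :=
      AddSubgroup.subset_closure ⟨a, haD, rfl⟩
    have hgen : ((∏ w, X w ^ (cellVec C a w).toNat)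
        - ∏ w, X w ^ (-(cellVec C a w)).toNat :
        MvPolynomial {v // v ∈ verts C} K) ∈ latticeIdeal K C (subcollW C W) :=
      Ideal.subset_span ⟨cellVec C a, hlat, rfl⟩
    rw [prod_pos_part K C (mem_verts ha (corner_mem00 a)) (mem_verts ha (corner_mem11 a)),
      prod_neg_part K C (mem_verts ha (corner_mem01 a)) (mem_verts ha (corner_mem10 a))]
      at hgen
    exact Submodule.mem_sup_right hgen
  · -- an edge of the cell lies in W
    simp only [cellEdges, Finset.mem_insert, Finset.mem_singleton] at hed
    have hXa := fun (h : a ∈ W) => X_mem_PW K C W (v := ⟨a, mem_verts ha (corner_mem00 a)⟩) h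
    have hXb := fun (h : a + (1,1) ∈ W) =>
      X_mem_PW K C W (v := ⟨a + (1,1), mem_verts ha (corner_mem11 a)⟩) h
    have hXc := fun (h : a + (0,1) ∈ W) =>
      X_mem_PW K C W (v := ⟨a + (0,1), mem_verts ha (corner_mem01 a)⟩) h
    have hXd := fun (h : a + (1,0) ∈ W) =>
      X_mem_PW K C W (v := ⟨a + (1,0), mem_verts ha (corner_mem10 a)⟩) h
    rcases hed with h | h | h | h <;> rw [h] at he1 he2
    · exact Submodule.sub_mem _ (Ideal.mul_mem_right _ _ (hXa he1))
        (Ideal.mul_mem_right _ _ (hXc he2))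
    · exact Submodule.sub_mem _ (Ideal.mul_mem_left _ _ (hXb he2))
        (Ideal.mul_mem_right _ _ (hXc he1))
    · exact Submodule.sub_mem _ (Ideal.mul_mem_left _ _ (hXb he1))
        (Ideal.mul_mem_left _ _ (hXd he2))
    · exact Submodule.sub_mem _ (Ideal.mul_mem_right _ _ (hXa he1))
        (Ideal.mul_mem_left _ _ (hXd he2))

end AdjPW

section PrimeDir
variable (K : Type*) [Field K] (C : Finset (ℤ × ℤ))
variable (p : Ideal (MvPolynomial {v // v ∈ verts C} K))

/-- the admissible set attached to a prime containing the adjacent minor ideal -/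
def Wof : Set (ℤ × ℤ) := {x | ∃ h : x ∈ verts C, (X ⟨x, h⟩ :
  MvPolynomial {v // v ∈ verts C} K) ∈ p}

lemma mem_Wof {x : ℤ × ℤ} (h : x ∈ verts C)
    (hX : (X ⟨x, h⟩ : MvPolynomial {v // v ∈ verts C} K) ∈ p) : x ∈ Wof K C p :=
  ⟨h, hX⟩

lemma X_mem_of_Wof {v : {v // v ∈ verts C}} (h : v.1 ∈ Wof K C p) :
    (X v : MvPolynomial {v // v ∈ verts C} K) ∈ p := by
  obtain ⟨h', hX⟩ := h
  have : (⟨v.1, h'⟩ : {v // v ∈ verts C}) = v := Subtype.ext rfl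
  rwa [this] at hX

lemma minor_mem (a : ℤ × ℤ) (ha : a ∈ C) :
    (X ⟨a, mem_verts ha (corner_mem00 a)⟩ * X ⟨a+(1,1), mem_verts ha (corner_mem11 a)⟩
      - X ⟨a+(0,1), mem_verts ha (corner_mem01 a)⟩
        * X ⟨a+(1,0), mem_verts ha (corner_mem10 a)⟩ :
      MvPolynomial {v // v ∈ verts C} K) ∈ adjIdeal K C :=
  Ideal.subset_span ⟨a, ha, rfl⟩

lemma Wof_admissible (hp : p.IsPrime) (hIp : adjIdeal K C ≤ p) :
    Admissible C (Wof K C p) := by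
  constructor
  · rintro x ⟨h, _⟩
    exact h
  intro a ha
  have hm := hIp (minor_mem K C a ha)
  set va : {v // v ∈ verts C} := ⟨a, mem_verts ha (corner_mem00 a)⟩
  set vb : {v // v ∈ verts C} := ⟨a+(1,1), mem_verts ha (corner_mem11 a)⟩
  set vc : {v // v ∈ verts C} := ⟨a+(0,1), mem_verts ha (corner_mem01 a)⟩
  set vd : {v // v ∈ verts C} := ⟨a+(1,0), mem_verts ha (corner_mem10 a)⟩
  have edge1 : (a, a + (0,1)) ∈ cellEdges a := by simp [cellEdges]
  have edge2 : (a + (0,1), a + (1,1)) ∈ cellEdges a := by simp [cellEdges]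
  have edge3 : (a + (1,1), a + (1,0)) ∈ cellEdges a := by simp [cellEdges]
  have edge4 : (a, a + (1,0)) ∈ cellEdges a := by simp [cellEdges]
  by_cases pa : a ∈ Wof K C p
  · right
    have hcd : (X vc * X vd : MvPolynomial {v // v ∈ verts C} K) ∈ p := by
      have h1 : (X va * X vb : MvPolynomial {v // v ∈ verts C} K) ∈ p :=
        Ideal.mul_mem_right _ _ (X_mem_of_Wof K C p pa)
      have := Submodule.sub_mem _ h1 hm
      simpa using this
    rcases hp.mem_or_mem hcd with h | h
    · exact ⟨_, edge1, pa, mem_Wof K C p _ h⟩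
    · exact ⟨_, edge4, pa, mem_Wof K C p _ h⟩
  · by_cases pb : a + (1,1) ∈ Wof K C p
    · right
      have hcd : (X vc * X vd : MvPolynomial {v // v ∈ verts C} K) ∈ p := by
        have h1 : (X va * X vb : MvPolynomial {v // v ∈ verts C} K) ∈ p :=
          Ideal.mul_mem_left _ _ (X_mem_of_Wof K C p pb)
        have := Submodule.sub_mem _ h1 hm
        simpa using this
      rcases hp.mem_or_mem hcd with h | h
      · exact ⟨_, edge2, mem_Wof K C p _ h, pb⟩
      · exact ⟨_, edge3, pb, mem_Wof K C p _ h⟩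
    · by_cases pc : a + (0,1) ∈ Wof K C p
      · right
        have hab : (X va * X vb : MvPolynomial {v // v ∈ verts C} K) ∈ p := by
          have h1 : (X vc * X vd : MvPolynomial {v // v ∈ verts C} K) ∈ p :=
            Ideal.mul_mem_right _ _ (X_mem_of_Wof K C p pc)
          have := Submodule.add_mem _ hm h1
          simpa using this
        rcases hp.mem_or_mem hab with h | h
        · exact ⟨_, edge1, mem_Wof K C p _ h, pc⟩
        · exact ⟨_, edge2, pc, mem_Wof K C p _ h⟩
      · by_cases pd : a + (1,0) ∈ Wof K C p
        · right
          have hab : (X va * X vb : MvPolynomial {v // v ∈ verts C} K) ∈ p := by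
            have h1 : (X vc * X vd : MvPolynomial {v // v ∈ verts C} K) ∈ p :=
              Ideal.mul_mem_left _ _ (X_mem_of_Wof K C p pd)
            have := Submodule.add_mem _ hm h1
            simpa using this
          rcases hp.mem_or_mem hab with h | h
          · exact ⟨_, edge4, mem_Wof K C p _ h, pd⟩
          · exact ⟨_, edge3, mem_Wof K C p _ h, pd⟩
        · left
          intro v hv hvW
          simp only [cellVerts, Finset.mem_insert, Finset.mem_singleton] at hv
          rcases hv with rfl | rfl | rfl | rfl
          · exact pa hvW
          · exact pd hvW
          · exact pc hvW
          · exact pb hvW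

set_option maxHeartbeats 1000000 in
set_option synthInstance.maxHeartbeats 400000 in
lemma PW_Wof_le (hp : p.IsPrime) (hIp : adjIdeal K C ≤ p) :
    PW K C (Wof K C p) ≤ p := by
  classical
  haveI := hp
  set S := MvPolynomial {v // v ∈ verts C} K
  set F := FractionRing (S ⧸ p)
  set ψ : S →+* F := (algebraMap (S ⧸ p) F).comp (Ideal.Quotient.mk p) with hψ
  have hker : ∀ f : S, ψ f = 0 ↔ f ∈ p := by
    intro f
    rw [hψ, RingHom.comp_apply]
    rw [map_eq_zero_iff _ (IsFractionRing.injective (S ⧸ p) F)]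
    exact Ideal.Quotient.eq_zero_iff_mem
  have hunit : ∀ v : {v // v ∈ verts C}, v.1 ∉ Wof K C p → ψ (X v) ≠ 0 := by
    intro v hv h0
    exact hv ⟨v.2, by rwa [hker] at h0⟩
  set uv : {v // v ∈ verts C} → Fˣ := fun v =>
    if h : v.1 ∈ Wof K C p then 1 else Units.mk0 (ψ (X v)) (hunit v h) with huv
  set χ : ({v // v ∈ verts C} → ℤ) → Fˣ := fun e => ∏ v, uv v ^ (e v) with hχ
  have hχadd : ∀ e e', χ (e + e') = χ e * χ e' := by
    intro e e'
    rw [hχ, ← Finset.prod_mul_distrib]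
    exact Finset.prod_congr rfl fun v _ => by rw [Pi.add_apply, zpow_add]
  have hχzero : χ 0 = 1 := by
    rw [hχ]
    exact Finset.prod_eq_one fun v _ => by simp
  have hχneg : ∀ e, χ (-e) = (χ e)⁻¹ := by
    intro e
    have := hχadd e (-e)
    rw [add_neg_cancel, hχzero] at this
    exact eq_inv_of_mul_eq_one_right (by rw [← this])
  have hχval : ∀ k : {v // v ∈ verts C} → ℕ, (∀ v, v.1 ∈ Wof K C p → k v = 0) →
      ((χ (fun v => (k v : ℤ)) : Fˣ) : F) = ψ (∏ v, X v ^ k v) := by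
    intro k hk
    rw [hχ, map_prod]
    simp only
    rw [← Units.coeHom_apply, map_prod]
    refine Finset.prod_congr rfl fun v _ => ?_
    rw [Units.coeHom_apply, Units.val_zpow_eq_zpow_val, zpow_natCast, map_pow]
    by_cases hvW : v.1 ∈ Wof K C p
    · rw [huv]
      simp only [dif_pos hvW, hk v hvW]
      simp
    · rw [huv]
      simp only [dif_neg hvW, Units.val_mk0]
  have hχgen : ∀ a ∈ subcollW C (Wof K C p), χ (cellVec C a) = 1 := by
    intro a haD
    have ha : a ∈ C := haD.1
    have hvan := lattice_vanish C (Wof K C p)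
      (AddSubgroup.subset_closure ⟨a, haD, rfl⟩)
    have hdecomp : cellVec C a = (fun v => (((cellVec C a v).toNat : ℕ) : ℤ))
        - (fun v => ((((-(cellVec C a v)).toNat : ℕ)) : ℤ)) := by
      funext v
      simp only [Pi.sub_apply]
      omega
    have h1 := hχval (fun v => (cellVec C a v).toNat)
      (fun v hv => by have h := hvan v hv; show (cellVec C a v).toNat = 0; omega)
    have h2 := hχval (fun v => (-(cellVec C a v)).toNat)
      (fun v hv => by have h := hvan v hv; show (-(cellVec C a v)).toNat = 0; omega)
    rw [prod_pos_part K C (mem_verts ha (corner_mem00 a)) (mem_verts ha (corner_mem11 a))]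
      at h1
    rw [prod_neg_part K C (mem_verts ha (corner_mem01 a)) (mem_verts ha (corner_mem10 a))]
      at h2
    have hm := hIp (minor_mem K C a ha)
    have hψm := (hker _).mpr hm
    rw [map_sub, sub_eq_zero] at hψm
    have hvaleq : χ (fun v => (((cellVec C a v).toNat : ℕ) : ℤ))
        = χ (fun v => ((((-(cellVec C a v)).toNat : ℕ)) : ℤ)) := by
      apply Units.ext
      rw [h1, h2, hψm]
    rw [hdecomp, sub_eq_add_neg, hχadd, hχneg, hvaleq]
    exact mul_inv_cancel _
  have hχall : ∀ e ∈ cellLattice C (subcollW C (Wof K C p)), χ e = 1 := by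
    intro e he
    induction he using AddSubgroup.closure_induction with
    | mem g hg =>
      obtain ⟨a, haD, rfl⟩ := hg
      exact hχgen a haD
    | zero => exact hχzero
    | add g g' _ _ ih ih' => rw [hχadd, ih, ih', mul_one]
    | neg g _ ih => rw [hχneg, ih, inv_one]
  rw [PW]
  apply sup_le
  · rw [Ideal.span_le]
    rintro g ⟨v, hv, rfl⟩
    exact X_mem_of_Wof K C p hv
  · rw [latticeIdeal, Ideal.span_le]
    rintro g ⟨e, he, rfl⟩
    have hvan := lattice_vanish C _ he
    have h1 := hχval (fun v => (e v).toNat)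
      (fun v hv => by have h := hvan v hv; show (e v).toNat = 0; omega)
    have h2 := hχval (fun v => (-(e v)).toNat)
      (fun v hv => by have h := hvan v hv; show (-(e v)).toNat = 0; omega)
    have hdecomp : e = (fun v => (((e v).toNat : ℕ) : ℤ))
        - (fun v => ((((-(e v)).toNat : ℕ)) : ℤ)) := by
      funext v
      simp only [Pi.sub_apply]
      omega
    have h3 := hχall e he
    rw [hdecomp, sub_eq_add_neg, hχadd, hχneg] at h3
    have hvaleq := mul_inv_eq_one.mp h3
    have : ψ (∏ w, X w ^ (e w).toNat) = ψ (∏ w, X w ^ (-(e w)).toNat) := by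
      rw [← h1, ← h2, hvaleq]
    rw [SetLike.mem_coe, ← hker, map_sub, this, sub_self]

end PrimeDir

/-- `√I_adj(𝒞) = ⋂_{W admissible} P_W(𝒞)`. -/
theorem stmt_12 (K : Type*) [Field K] (C : Finset (ℤ × ℤ)) (hC : C.Nonempty) :
    (adjIdeal K C).radical = ⨅ W ∈ {W : Set (ℤ × ℤ) | Admissible C W}, PW K C W := by
  apply le_antisymm
  · refine le_iInf fun W => le_iInf fun hW => ?_
    have h1 := Ideal.radical_mono (adj_le_PW K C W hW)
    rwa [(PW_isPrime K C W).radical] at h1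
  · rw [Ideal.radical_eq_sInf]
    apply le_sInf
    rintro J ⟨hIJ, hJp⟩
    have hadm : Admissible C (Wof K C J) := Wof_admissible K C J hJp hIJ
    exact le_trans (iInf₂_le (Wof K C J) hadm) (PW_Wof_le K C J hJp hIJ)
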